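/- Let F : ℍ^{N×S} → ℍ^{M×R} and G : ℍ^{N×S} → ℍ^{R×P} be ℝ-differentiable at Q ∈ ℍ^{N×S}, let H(Q) = F(Q)G(Q) (matrix product), and let μ ∈ ℍ, μ ≠ 0. Then the conjugate GHR Jacobian of H satisfies the product rule D_{Q^{μ*}}H(Q) = (I_P ⊗ F(Q)) · D_{Q^{μ*}}G(Q) + D_{Q^{μ*}}F̃(Q), where F̃ is the function P ↦ F(P)·G(Q) with G held constant at its value at Q, and I_P ⊗ F(Q) is the Kronecker product, i.e. the MP × RP matrix with ((m,p),(r,p′)) entry equal to F(Q)_{mr} if p = p′ and 0 otherwise. -/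

import Mathlib

open scoped Quaternion

noncomputable section

/-- The imaginary unit `i` of the quaternions. -/
def qI : ℍ[ℝ] := ⟨0, 1, 0, 0⟩
/-- The imaginary unit `j` of the quaternions. -/
def qJ : ℍ[ℝ] := ⟨0, 0, 1, 0⟩
/-- The imaginary unit `k` of the quaternions. -/
def qK : ℍ[ℝ] := ⟨0, 0, 0, 1⟩

/-- The `N × S` quaternion matrix with entry `d` at position `(n,s)` and `0` elsewhere. -/
def single {N S : ℕ} (n : Fin N) (s : Fin S) (d : ℍ[ℝ]) : Fin N → Fin S → ℍ[ℝ] :=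
  Pi.single n (Pi.single s d)

/-- Real directional (Fréchet) derivative of a scalar function of a matrix variable, in the
direction `d` at the single entry `(n,s)` (the other entries held fixed). -/
def pd {N S : ℕ} (f : (Fin N → Fin S → ℍ[ℝ]) → ℍ[ℝ]) (Q : Fin N → Fin S → ℍ[ℝ])
    (n : Fin N) (s : Fin S) (d : ℍ[ℝ]) : ℍ[ℝ] :=
  fderiv ℝ f Q (single n s d)

/-- Left GHR derivative `∂f/∂q_{ns}^{μ*}` of a scalar function `f` with respect to the entry
`q_{ns}` of its matrix argument:
`¼(∂f/∂q_a + (∂f/∂q_b) i^μ + (∂f/∂q_c) j^μ + (∂f/∂q_d) k^μ)`, with `x^μ = μ x μ⁻¹`. -/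
def ghrEStar {N S : ℕ} (μ : ℍ[ℝ]) (f : (Fin N → Fin S → ℍ[ℝ]) → ℍ[ℝ])
    (Q : Fin N → Fin S → ℍ[ℝ]) (n : Fin N) (s : Fin S) : ℍ[ℝ] :=
  (1 / 4 : ℝ) • (pd f Q n s 1 + pd f Q n s qI * (μ * qI * μ⁻¹)
    + pd f Q n s qJ * (μ * qJ * μ⁻¹) + pd f Q n s qK * (μ * qK * μ⁻¹))

/-- The conjugate GHR Jacobian `D_{Q^{μ*}}F(Q)`: the `MP × NS` quaternion matrix whose
`((m,p),(n,s))` entry is `∂F_{mp}/∂q_{ns}^{μ*}`. -/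
def ghrJacStar {N S M P : ℕ} (μ : ℍ[ℝ])
    (F : (Fin N → Fin S → ℍ[ℝ]) → (Fin M → Fin P → ℍ[ℝ]))
    (Q : Fin N → Fin S → ℍ[ℝ]) : Matrix (Fin M × Fin P) (Fin N × Fin S) ℍ[ℝ] :=
  Matrix.of fun mp ns => ghrEStar μ (fun X => F X mp.1 mp.2) Q ns.1 ns.2

/-- Quaternion matrix product. -/
def mmul {M R P : ℕ} (A : Fin M → Fin R → ℍ[ℝ]) (B : Fin R → Fin P → ℍ[ℝ]) :
    Fin M → Fin P → ℍ[ℝ] :=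
  fun m p => ∑ r, A m r * B r p

/-- The Kronecker product `I_P ⊗ A`: the `MP × RP` matrix with `((m,p),(r,p′))` entry
`A_{mr}` if `p = p′` and `0` otherwise. -/
def kronIdLeft {M R : ℕ} (P : ℕ) (A : Fin M → Fin R → ℍ[ℝ]) :
    Matrix (Fin M × Fin P) (Fin R × Fin P) ℍ[ℝ] :=
  Matrix.of fun mp rp => if mp.2 = rp.2 then A mp.1 rp.1 else 0

section Aux

variable {N S : ℕ}

lemma pd_sum {ι : Type*} (u : Finset ι) (f : ι → (Fin N → Fin S → ℍ[ℝ]) → ℍ[ℝ])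
    (Q : Fin N → Fin S → ℍ[ℝ]) (n : Fin N) (s : Fin S)
    (h : ∀ i ∈ u, DifferentiableAt ℝ (f i) Q) (d : ℍ[ℝ]) :
    pd (fun X => ∑ i ∈ u, f i X) Q n s d = ∑ i ∈ u, pd (f i) Q n s d := by
  unfold pd
  rw [fderiv_fun_sum h]
  simp

lemma ghrEStar_sum {ι : Type*} (μ : ℍ[ℝ]) (u : Finset ι)
    (f : ι → (Fin N → Fin S → ℍ[ℝ]) → ℍ[ℝ])
    (Q : Fin N → Fin S → ℍ[ℝ]) (n : Fin N) (s : Fin S)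
    (h : ∀ i ∈ u, DifferentiableAt ℝ (f i) Q) :
    ghrEStar μ (fun X => ∑ i ∈ u, f i X) Q n s = ∑ i ∈ u, ghrEStar μ (f i) Q n s := by
  unfold ghrEStar
  simp only [pd_sum u f Q n s h, Finset.sum_mul, ← Finset.sum_add_distrib, Finset.smul_sum]

lemma pd_mul (f g : (Fin N → Fin S → ℍ[ℝ]) → ℍ[ℝ]) (Q : Fin N → Fin S → ℍ[ℝ])
    (n : Fin N) (s : Fin S) (hf : DifferentiableAt ℝ f Q) (hg : DifferentiableAt ℝ g Q)
    (d : ℍ[ℝ]) :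
    pd (fun X => f X * g X) Q n s d = f Q * pd g Q n s d + pd f Q n s d * g Q := by
  unfold pd
  rw [fderiv_fun_mul' hf hg]
  simp [smul_eq_mul]

lemma pd_mul_const (f : (Fin N → Fin S → ℍ[ℝ]) → ℍ[ℝ]) (c : ℍ[ℝ])
    (Q : Fin N → Fin S → ℍ[ℝ]) (n : Fin N) (s : Fin S) (hf : DifferentiableAt ℝ f Q)
    (d : ℍ[ℝ]) :
    pd (fun X => f X * c) Q n s d = pd f Q n s d * c := by
  unfold pd
  rw [fderiv_mul_const' hf]
  simp

lemma ghrEStar_mul (μ : ℍ[ℝ]) (f g : (Fin N → Fin S → ℍ[ℝ]) → ℍ[ℝ])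
    (Q : Fin N → Fin S → ℍ[ℝ]) (n : Fin N) (s : Fin S)
    (hf : DifferentiableAt ℝ f Q) (hg : DifferentiableAt ℝ g Q) :
    ghrEStar μ (fun X => f X * g X) Q n s
      = f Q * ghrEStar μ g Q n s + ghrEStar μ (fun X => f X * g Q) Q n s := by
  unfold ghrEStar
  have h1 : ∀ d, pd (fun X => f X * g X) Q n s d
      = f Q * pd g Q n s d + pd (fun X => f X * g Q) Q n s d := by
    intro d
    rw [pd_mul f g Q n s hf hg, pd_mul_const f (g Q) Q n s hf]
  simp only [h1]
  simp only [mul_add, add_mul, smul_add, mul_smul_comm, mul_assoc]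
  abel

end Aux

/-- **Conjugate GHR matrix product rule** (Theorem 1, second identity):
`D_{Q^{μ*}}(FG)(Q) = (I_P ⊗ F(Q)) D_{Q^{μ*}}G(Q) + D_{Q^{μ*}}(F·G(Q))(Q)`,
the last Jacobian taken with `G` held constant at its value at `Q`. -/


theorem ghr_star_product_rule {N S M R P : ℕ} (μ : ℍ[ℝ]) (hμ : μ ≠ 0)
    (F : (Fin N → Fin S → ℍ[ℝ]) → (Fin M → Fin R → ℍ[ℝ]))
    (G : (Fin N → Fin S → ℍ[ℝ]) → (Fin R → Fin P → ℍ[ℝ]))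
    (Q : Fin N → Fin S → ℍ[ℝ])
    (hF : DifferentiableAt ℝ F Q) (hG : DifferentiableAt ℝ G Q) :
    ghrJacStar μ (fun X => mmul (F X) (G X)) Q =
      kronIdLeft P (F Q) * ghrJacStar μ G Q
        + ghrJacStar μ (fun X => mmul (F X) (G Q)) Q := by
  have hFe : ∀ m r, DifferentiableAt ℝ (fun X => F X m r) Q := fun m r =>
    differentiableAt_pi.mp (differentiableAt_pi.mp hF m) r
  have hGe : ∀ r p, DifferentiableAt ℝ (fun X => G X r p) Q := fun r p =>
    differentiableAt_pi.mp (differentiableAt_pi.mp hG r) p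
  refine Matrix.ext fun ⟨m, p⟩ ⟨n, s⟩ => ?_
  show ghrEStar μ (fun X => mmul (F X) (G X) m p) Q n s = _
  have lhs : ghrEStar μ (fun X => mmul (F X) (G X) m p) Q n s
      = ∑ r, (F Q m r * ghrEStar μ (fun X => G X r p) Q n s
          + ghrEStar μ (fun X => F X m r * G Q r p) Q n s) := by
    unfold mmul
    rw [ghrEStar_sum μ Finset.univ (fun r X => F X m r * G X r p) Q n s
      (fun r _ => (hFe m r).mul (hGe r p))]
    exact Finset.sum_congr rfl fun r _ => ghrEStar_mul μ _ _ Q n s (hFe m r) (hGe r p)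
  rw [lhs, Finset.sum_add_distrib, Matrix.add_apply, Matrix.mul_apply]
  congr 1
  · rw [Fintype.sum_prod_type]
    refine Finset.sum_congr rfl fun r _ => ?_
    simp [kronIdLeft, ghrJacStar, Finset.sum_ite_eq, ite_mul]
  · show _ = ghrEStar μ (fun X => mmul (F X) (G Q) m p) Q n s
    unfold mmul
    rw [ghrEStar_sum μ Finset.univ (fun r X => F X m r * G Q r p) Q n s
      (fun r _ => (hFe m r).mul_const (G Q r p))]
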